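/- Let q_{i-1}, q_i, q_{i+1}, q_{i+2} be four consecutive points (in x-order) of the recursively constructed point set P_M, and set δ_j = δ(q_j, q_{j+1}). If δ_{i-1} > δ_i < δ_{i+1} and δ_{i-1} ≥ δ_{i+1}, then q_{i+1} lies in the convex hull of {q_{i-1}, q_i, q_{i+2}}; if instead δ_{i-1} < δ_{i+1}, then q_i lies in the convex hull of {q_{i-1}, q_{i+1}, q_{i+2}}. In particular, four consecutive points with a 'local minimum' of δ in the middle are not in convex position. -/

import Mathlib

/-- Twice the signed area of the triangle `a b c`: positive iff a left turn. -/
def det2 (a b c : ℝ × ℝ) : ℝ :=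
  (b.1 - a.1) * (c.2 - a.2) - (b.2 - a.2) * (c.1 - a.1)

/-- A finite planar point set is in convex position if no point lies in the
convex hull of the others. -/
def ConvexPos (S : Finset (ℝ × ℝ)) : Prop :=
  ∀ p ∈ S, p ∉ convexHull ℝ ((S.erase p : Finset (ℝ × ℝ)) : Set (ℝ × ℝ))

/-- `p : Fin (2^M) → ℝ × ℝ` is a realization of the recursive point set `P_M`:
the points are ordered by increasing `x`-coordinate, and for every copy of
`P_{t+1} = L ∪ R` (a block of `2^(t+1)` consecutive indices starting at a multiple of
`2^(t+1)`, `L` its first half and `R` its second half), every line through two points of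
`L` passes below every point of `R` (left turn), and every line through two points of `R`
passes above every point of `L` (right turn as seen from the left point). -/
def Stepup (M : ℕ) (p : Fin (2 ^ M) → ℝ × ℝ) : Prop :=
  (StrictMono fun i => (p i).1) ∧
  (∀ t, t < M → ∀ b, ∀ i j k : Fin (2 ^ M),
    b * 2 ^ (t + 1) ≤ i.val → i.val < j.val → j.val < b * 2 ^ (t + 1) + 2 ^ t →
    b * 2 ^ (t + 1) + 2 ^ t ≤ k.val → k.val < (b + 1) * 2 ^ (t + 1) →
    0 < det2 (p i) (p j) (p k)) ∧
  (∀ t, t < M → ∀ b, ∀ i j k : Fin (2 ^ M),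
    b * 2 ^ (t + 1) ≤ i.val → i.val < b * 2 ^ (t + 1) + 2 ^ t →
    b * 2 ^ (t + 1) + 2 ^ t ≤ j.val → j.val < k.val → k.val < (b + 1) * 2 ^ (t + 1) →
    det2 (p j) (p k) (p i) < 0)

/-- `deltaFn M i j`: the largest `t ≤ M` such that `p_i` and `p_j` lie in a common copy of
`P_t = L ∪ R` (a block of `2^t` consecutive indices) with `p_i ∈ L` and `p_j ∈ R`. -/
def deltaFn (M i j : ℕ) : ℕ :=
  Nat.findGreatest
    (fun t => 1 ≤ t ∧ i / 2 ^ (t - 1) % 2 = 0 ∧ j / 2 ^ (t - 1) = i / 2 ^ (t - 1) + 1) M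

/- ### Auxiliary lemmas -/

lemma mem_triangle_hull (a b c x : ℝ × ℝ) (hD : 0 < det2 a b c)
    (h1 : 0 ≤ det2 x b c) (h2 : 0 ≤ det2 a x c) (h3 : 0 ≤ det2 a b x) :
    x ∈ convexHull ℝ ({a, b, c} : Set (ℝ × ℝ)) := by
  have hD' : det2 a b c ≠ 0 := ne_of_gt hD
  set α := det2 x b c / det2 a b c with hα
  set β := det2 a x c / det2 a b c with hβ
  set γ := det2 a b x / det2 a b c with hγ
  have hsum : α + β + γ = 1 := by
    rw [hα, hβ, hγ, ← add_div, ← add_div, div_eq_one_iff_eq hD']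
    simp only [det2]; ring
  have hx : x = α • a + β • b + γ • c := by
    have e1 : x.1 * det2 a b c = det2 x b c * a.1 + det2 a x c * b.1 + det2 a b x * c.1 := by
      simp only [det2]; ring
    have e2 : x.2 * det2 a b c = det2 x b c * a.2 + det2 a x c * b.2 + det2 a b x * c.2 := by
      simp only [det2]; ring
    apply Prod.ext
    · simp only [Prod.fst_add, Prod.smul_fst, smul_eq_mul, hα, hβ, hγ]
      field_simp
      linarith [e1]
    · simp only [Prod.snd_add, Prod.smul_snd, smul_eq_mul, hα, hβ, hγ]
      field_simp
      linarith [e2]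
  have hmem := Finset.centerMass_mem_convexHull (t := (Finset.univ : Finset (Fin 3)))
      (w := ![α, β, γ]) (z := ![a, b, c]) (s := ({a, b, c} : Set (ℝ × ℝ)))
      (by intro i _; fin_cases i
          · exact div_nonneg h1 hD.le
          · exact div_nonneg h2 hD.le
          · exact div_nonneg h3 hD.le)
      (by rw [Fin.sum_univ_three]; simp only [Matrix.cons_val_zero, Matrix.cons_val_one,
            Matrix.head_cons, Matrix.cons_val_two, Matrix.tail_cons]; rw [hsum]; exact one_pos)
      (by intro i _; fin_cases i <;> simp)
  have heq : (Finset.univ : Finset (Fin 3)).centerMass ![α, β, γ] ![a, b, c]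
      = α • a + β • b + γ • c := by
    rw [Finset.centerMass, Fin.sum_univ_three, Fin.sum_univ_three]
    simp only [Matrix.cons_val_zero, Matrix.cons_val_one, Matrix.head_cons,
      Matrix.cons_val_two, Matrix.tail_cons]
    rw [hsum, inv_one, one_smul]
  rw [hx, ← heq]
  exact hmem

lemma exists_split : ∀ y x : ℕ, x < y →
    ∃ s, x / 2 ^ s % 2 = 0 ∧ y / 2 ^ s = x / 2 ^ s + 1 ∧ 2 ^ s ≤ y := by
  intro y
  induction y using Nat.strong_induction_on with
  | _ y ih =>
    intro x hxy
    by_cases h : x / 2 = y / 2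
    · exact ⟨0, by simpa using (by omega : x % 2 = 0), by simpa using (by omega : y = x + 1), by
        simpa using (by omega : 1 ≤ y)⟩
    · have h2 : x / 2 < y / 2 := by omega
      have hy : y / 2 < y := by omega
      obtain ⟨s, hs1, hs2, hs3⟩ := ih (y / 2) hy (x / 2) h2
      have hpow : ∀ z : ℕ, z / 2 ^ (s + 1) = z / 2 / 2 ^ s := by
        intro z; rw [Nat.div_div_eq_div_mul, ← pow_succ']
      refine ⟨s + 1, ?_, ?_, ?_⟩
      · rw [hpow]; exact hs1
      · rw [hpow, hpow]; exact hs2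
      · have : 2 ^ (s + 1) = 2 * 2 ^ s := by rw [pow_succ']
        omega

lemma deltaFn_le (M x y : ℕ) : deltaFn M x y ≤ M := Nat.findGreatest_le M

lemma deltaFn_spec {M x y : ℕ} (hxy : x < y) (hyM : y < 2 ^ M) :
    1 ≤ deltaFn M x y ∧
      x / 2 ^ (deltaFn M x y - 1) % 2 = 0 ∧
      y / 2 ^ (deltaFn M x y - 1) = x / 2 ^ (deltaFn M x y - 1) + 1 := by
  obtain ⟨s, h1, h2, h3⟩ := exists_split y x hxy
  have hsM : s + 1 ≤ M := by
    have h4 : 2 ^ s < 2 ^ M := lt_of_le_of_lt h3 hyM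
    have := (Nat.pow_lt_pow_iff_right (by norm_num : 1 < 2)).mp h4
    omega
  unfold deltaFn
  exact Nat.findGreatest_spec (m := s + 1)
    (P := fun t => 1 ≤ t ∧ x / 2 ^ (t - 1) % 2 = 0 ∧ y / 2 ^ (t - 1) = x / 2 ^ (t - 1) + 1)
    hsM ⟨by omega, by simpa using h1, by simpa using h2⟩

lemma div_up {x y P : ℕ} (he : x / P % 2 = 0) (hs : y / P = x / P + 1) :
    y / (P * 2) = x / (P * 2) := by
  rw [← Nat.div_div_eq_div_mul, ← Nat.div_div_eq_div_mul, hs]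
  omega

lemma div_up' {x y t : ℕ} (he : x / 2 ^ t % 2 = 0) (hs : y / 2 ^ t = x / 2 ^ t + 1) :
    y / 2 ^ (t + 1) = x / 2 ^ (t + 1) := by
  rw [pow_succ]; exact div_up he hs

lemma div_agree {x y m q : ℕ} (h : x / 2 ^ m = y / 2 ^ m) (hmq : m ≤ q) :
    x / 2 ^ q = y / 2 ^ q := by
  have hq : 2 ^ q = 2 ^ m * 2 ^ (q - m) := by rw [← pow_add]; congr 1; omega
  rw [hq, ← Nat.div_div_eq_div_mul, ← Nat.div_div_eq_div_mul, h]

lemma lh_lb (x t : ℕ) : x / 2 ^ (t + 1) * 2 ^ (t + 1) ≤ x := Nat.div_mul_le_self x _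

lemma rh_ub (x t : ℕ) : x < (x / 2 ^ (t + 1) + 1) * 2 ^ (t + 1) := by
  have hpos : 0 < 2 ^ (t + 1) := Nat.pow_pos (by norm_num)
  calc x = 2 ^ (t + 1) * (x / 2 ^ (t + 1)) + x % 2 ^ (t + 1) := (Nat.div_add_mod x _).symm
    _ < 2 ^ (t + 1) * (x / 2 ^ (t + 1)) + 2 ^ (t + 1) := by
        exact Nat.add_lt_add_left (Nat.mod_lt x hpos) _
    _ = (x / 2 ^ (t + 1) + 1) * 2 ^ (t + 1) := by ring

lemma lh_ub {x t : ℕ} (h : x / 2 ^ t % 2 = 0) :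
    x < x / 2 ^ (t + 1) * 2 ^ (t + 1) + 2 ^ t := by
  have hpos : 0 < 2 ^ t := Nat.pow_pos (by norm_num)
  have h1 : x % (2 ^ t * 2) / 2 ^ t = x / 2 ^ t % 2 := Nat.mod_mul_right_div_self x (2 ^ t) 2
  have h2 : x % (2 ^ t * 2) < 2 ^ t := by
    have := (Nat.div_eq_zero_iff.mp (by rw [h1, h] : x % (2 ^ t * 2) / 2 ^ t = 0)).resolve_left hpos.ne'
    exact this
  have h3 : x = x / (2 ^ t * 2) * (2 ^ t * 2) + x % (2 ^ t * 2) :=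
    (Nat.div_add_mod' x (2 ^ t * 2)).symm
  rw [pow_succ]
  omega

lemma rh_lb {x t : ℕ} (h : x / 2 ^ t % 2 = 1) :
    x / 2 ^ (t + 1) * 2 ^ (t + 1) + 2 ^ t ≤ x := by
  have hpos : 0 < 2 ^ t := Nat.pow_pos (by norm_num)
  have h1 : x % (2 ^ t * 2) / 2 ^ t = x / 2 ^ t % 2 := Nat.mod_mul_right_div_self x (2 ^ t) 2
  have h2 : 2 ^ t ≤ x % (2 ^ t * 2) := by
    by_contra hcon
    have : x % (2 ^ t * 2) / 2 ^ t = 0 := Nat.div_eq_of_lt (by omega)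
    rw [h1, h] at this
    exact absurd this one_ne_zero
  have h3 : x = x / (2 ^ t * 2) * (2 ^ t * 2) + x % (2 ^ t * 2) :=
    (Nat.div_add_mod' x (2 ^ t * 2)).symm
  rw [pow_succ]
  omega

/-- No local minimum: if four points `p a, p b, p c, p d` of `P_M` (in `x`-order) have
`δ(a,b) > δ(b,c) < δ(c,d)`, then when `δ(a,b) ≥ δ(c,d)` the point `p c` lies in the
convex hull of the other three, and when `δ(a,b) < δ(c,d)` the point `p b` does; in
particular the four points are not in convex position. -/
theorem stepping_up_no_local_min (M : ℕ) (p : Fin (2 ^ M) → ℝ × ℝ) (hp : Stepup M p)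
    (a b c d : Fin (2 ^ M)) (hab : a < b) (hbc : b < c) (hcd : c < d)
    (h1 : deltaFn M b.val c.val < deltaFn M a.val b.val)
    (h2 : deltaFn M b.val c.val < deltaFn M c.val d.val) :
    (deltaFn M c.val d.val ≤ deltaFn M a.val b.val →
      p c ∈ convexHull ℝ ({p a, p b, p d} : Set (ℝ × ℝ))) ∧
    (deltaFn M a.val b.val < deltaFn M c.val d.val →
      p b ∈ convexHull ℝ ({p a, p c, p d} : Set (ℝ × ℝ))) ∧
    ¬ ConvexPos ({p a, p b, p c, p d} : Finset (ℝ × ℝ)) := by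
  obtain ⟨hmono, hLt, hRt⟩ := hp
  have hab' : a.val < b.val := hab
  have hbc' : b.val < c.val := hbc
  have hcd' : c.val < d.val := hcd
  obtain ⟨hab1, hab2, hab3⟩ := deltaFn_spec hab' b.isLt
  obtain ⟨hbc1, hbc2, hbc3⟩ := deltaFn_spec hbc' c.isLt
  obtain ⟨hcd1, hcd2, hcd3⟩ := deltaFn_spec hcd' d.isLt
  set sab := deltaFn M a.val b.val - 1 with hsab
  set sbc := deltaFn M b.val c.val - 1 with hsbc
  set scd := deltaFn M c.val d.val - 1 with hscd
  have habM : deltaFn M a.val b.val ≤ M := deltaFn_le _ _ _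
  have hcdM : deltaFn M c.val d.val ≤ M := deltaFn_le _ _ _
  have hsbc_ab : sbc < sab := by omega
  have hsbc_cd : sbc < scd := by omega
  have hsabM : sab < M := by omega
  have hscdM : scd < M := by omega
  -- agreement above the splitting level
  have hBC1 : c.val / 2 ^ (sbc + 1) = b.val / 2 ^ (sbc + 1) := div_up' hbc2 hbc3
  have hAB1 : b.val / 2 ^ (sab + 1) = a.val / 2 ^ (sab + 1) := div_up' hab2 hab3
  have hCD1 : d.val / 2 ^ (scd + 1) = c.val / 2 ^ (scd + 1) := div_up' hcd2 hcd3
  have hB_odd : b.val / 2 ^ sab % 2 = 1 := by omega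
  have hD_odd : d.val / 2 ^ scd % 2 = 1 := by omega
  have hCsab : c.val / 2 ^ sab = b.val / 2 ^ sab := div_agree hBC1 (by omega)
  have hCsab1 : c.val / 2 ^ (sab + 1) = b.val / 2 ^ (sab + 1) := div_agree hBC1 (by omega)
  have hBscd : b.val / 2 ^ scd = c.val / 2 ^ scd := (div_agree hBC1 (by omega)).symm
  have hBscd1 : b.val / 2 ^ (scd + 1) = c.val / 2 ^ (scd + 1) := (div_agree hBC1 (by omega)).symm
  have hCblk : c.val / 2 ^ (sab + 1) = a.val / 2 ^ (sab + 1) := by rw [hCsab1, hAB1]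
  -- det2 (p b) (p c) (p a) < 0 holds in both cases
  have hbca : det2 (p b) (p c) (p a) < 0 := by
    apply hRt sab hsabM (a.val / 2 ^ (sab + 1)) a b c
    · exact lh_lb a.val sab
    · exact lh_ub hab2
    · rw [← hAB1]; exact rh_lb hB_odd
    · exact hbc'
    · rw [← hCblk]; exact rh_ub c.val sab
  -- Case 1
  have key1 : deltaFn M c.val d.val ≤ deltaFn M a.val b.val →
      p c ∈ convexHull ℝ ({p a, p b, p d} : Set (ℝ × ℝ)) := by
    intro hle
    have hne : scd ≠ sab := by
      intro h
      have hb0 : b.val / 2 ^ scd % 2 = 0 := by rw [hBscd]; exact hcd2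
      rw [h] at hb0
      omega
    have hlt : scd < sab := by omega
    have hbcd : 0 < det2 (p b) (p c) (p d) := by
      apply hLt scd hscdM (c.val / 2 ^ (scd + 1)) b c d
      · rw [← hBscd1]; exact lh_lb b.val scd
      · exact hbc'
      · exact lh_ub hcd2
      · rw [← hCD1]; exact rh_lb hD_odd
      · rw [← hCD1]; exact rh_ub d.val scd
    have hDsab : d.val / 2 ^ sab = c.val / 2 ^ sab := div_agree hCD1 (by omega)
    have hDsab1 : d.val / 2 ^ (sab + 1) = c.val / 2 ^ (sab + 1) := div_agree hCD1 (by omega)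
    have hDblk : d.val / 2 ^ (sab + 1) = a.val / 2 ^ (sab + 1) := by rw [hDsab1, hCblk]
    have hD_oddab : d.val / 2 ^ sab % 2 = 1 := by rw [hDsab, hCsab]; exact hB_odd
    have hbda : det2 (p b) (p d) (p a) < 0 := by
      apply hRt sab hsabM (a.val / 2 ^ (sab + 1)) a b d
      · exact lh_lb a.val sab
      · exact lh_ub hab2
      · rw [← hAB1]; exact rh_lb hB_odd
      · omega
      · rw [← hDblk]; exact rh_ub d.val sab
    have hcda : det2 (p c) (p d) (p a) < 0 := by
      apply hRt sab hsabM (a.val / 2 ^ (sab + 1)) a c d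
      · exact lh_lb a.val sab
      · exact lh_ub hab2
      · rw [← hCblk]
        exact rh_lb (by rw [hCsab]; exact hB_odd)
      · exact hcd'
      · rw [← hDblk]; exact rh_ub d.val sab
    have hmem := mem_triangle_hull (p a) (p d) (p b) (p c)
      (by have e : det2 (p a) (p d) (p b) = -det2 (p b) (p d) (p a) := by
            simp only [det2]; ring
          linarith)
      (by have e : det2 (p c) (p d) (p b) = det2 (p b) (p c) (p d) := by
            simp only [det2]; ring
          linarith)
      (by have e : det2 (p a) (p c) (p b) = -det2 (p b) (p c) (p a) := by
            simp only [det2]; ring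
          linarith)
      (by have e : det2 (p a) (p d) (p c) = -det2 (p c) (p d) (p a) := by
            simp only [det2]; ring
          linarith)
    have hset : ({p a, p d, p b} : Set (ℝ × ℝ)) = {p a, p b, p d} := by
      rw [Set.pair_comm (p d) (p b)]
    rwa [hset] at hmem
  -- Case 2
  have key2 : deltaFn M a.val b.val < deltaFn M c.val d.val →
      p b ∈ convexHull ℝ ({p a, p c, p d} : Set (ℝ × ℝ)) := by
    intro hgt
    have hlt2 : sab < scd := by omega
    have hABscd1 : b.val / 2 ^ (scd + 1) = a.val / 2 ^ (scd + 1) := div_agree hAB1 (by omega)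
    have hAblk2 : a.val / 2 ^ (scd + 1) = c.val / 2 ^ (scd + 1) := by
      rw [← hABscd1, hBscd1]
    have hB_e2 : b.val / 2 ^ scd % 2 = 0 := by rw [hBscd]; exact hcd2
    have habd : 0 < det2 (p a) (p b) (p d) := by
      apply hLt scd hscdM (c.val / 2 ^ (scd + 1)) a b d
      · rw [← hAblk2]; exact lh_lb a.val scd
      · exact hab'
      · rw [← hBscd1]; exact lh_ub hB_e2
      · rw [← hCD1]; exact rh_lb hD_odd
      · rw [← hCD1]; exact rh_ub d.val scd
    have hacd : 0 < det2 (p a) (p c) (p d) := by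
      apply hLt scd hscdM (c.val / 2 ^ (scd + 1)) a c d
      · rw [← hAblk2]; exact lh_lb a.val scd
      · omega
      · exact lh_ub hcd2
      · rw [← hCD1]; exact rh_lb hD_odd
      · rw [← hCD1]; exact rh_ub d.val scd
    have hbcd : 0 < det2 (p b) (p c) (p d) := by
      apply hLt scd hscdM (c.val / 2 ^ (scd + 1)) b c d
      · rw [← hBscd1]; exact lh_lb b.val scd
      · exact hbc'
      · exact lh_ub hcd2
      · rw [← hCD1]; exact rh_lb hD_odd
      · rw [← hCD1]; exact rh_ub d.val scd
    exact mem_triangle_hull (p a) (p c) (p d) (p b) hacd hbcd.le habd.le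
      (by have e : det2 (p a) (p c) (p b) = -det2 (p b) (p c) (p a) := by
            simp only [det2]; ring
          linarith)
  refine ⟨key1, key2, ?_⟩
  intro hCP
  have hne : ∀ i j : Fin (2 ^ M), i < j → p i ≠ p j := by
    intro i j hij heq
    exact absurd (congrArg Prod.fst heq) (ne_of_lt (hmono hij))
  by_cases hle : deltaFn M c.val d.val ≤ deltaFn M a.val b.val
  · have hc := key1 hle
    refine hCP (p c) (by simp) (convexHull_mono ?_ hc)
    intro z hz
    simp only [Set.mem_insert_iff, Set.mem_singleton_iff] at hz
    rcases hz with rfl | rfl | rfl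
    · exact Finset.mem_coe.mpr (Finset.mem_erase.mpr ⟨hne a c (hab.trans hbc), by simp⟩)
    · exact Finset.mem_coe.mpr (Finset.mem_erase.mpr ⟨hne b c hbc, by simp⟩)
    · exact Finset.mem_coe.mpr (Finset.mem_erase.mpr ⟨(hne c d hcd).symm, by simp⟩)
  · have hb := key2 (by omega)
    refine hCP (p b) (by simp) (convexHull_mono ?_ hb)
    intro z hz
    simp only [Set.mem_insert_iff, Set.mem_singleton_iff] at hz
    rcases hz with rfl | rfl | rfl
    · exact Finset.mem_coe.mpr (Finset.mem_erase.mpr ⟨hne a b hab, by simp⟩)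
    · exact Finset.mem_coe.mpr (Finset.mem_erase.mpr ⟨(hne b c hbc).symm, by simp⟩)
    · exact Finset.mem_coe.mpr (Finset.mem_erase.mpr ⟨(hne b d (hbc.trans hcd)).symm, by simp⟩)
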